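/- Let (X_t)_{t≥1} be a sequence of random variables with values in [0,1], adapted to a filtration (F_t), and suppose there is ε > 0 such that E[X_t | F_{t-1}] ≥ ε for all t. Let B ≥ 0 and define the stopping time τ = min{t : X_1 + ... + X_t > B}. Then E[τ] ≤ (B+1)/ε. -/

import Mathlib

open MeasureTheory ENNReal

theorem stmt_0 {Ω : Type*} {m : MeasurableSpace Ω} {μ : Measure Ω} [IsProbabilityMeasure μ]
    (ℱ : Filtration ℕ m) (X : ℕ → Ω → ℝ) (hadapted : Adapted ℱ X)
    (hbound : ∀ t ω, 1 ≤ t → X t ω ∈ Set.Icc (0 : ℝ) 1)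
    (ε : ℝ) (hε : 0 < ε)
    (hcond : ∀ t, 1 ≤ t → ∀ᵐ ω ∂μ, ε ≤ (μ[X t | ℱ (t - 1)]) ω)
    (B : ℝ) (hB : 0 ≤ B)
    (τ : Ω → ℕ)
    (hτ : ∀ ω, τ ω = sInf {t : ℕ | 1 ≤ t ∧ B < ∑ s ∈ Finset.Icc 1 t, X s ω}) :
    ∫⁻ ω, (τ ω : ℝ≥0∞) ∂μ ≤ ENNReal.ofReal ((B + 1) / ε) := by
  classical
  set S : ℕ → Ω → ℝ := fun t ω => ∑ s ∈ Finset.Icc 1 t, X s ω with hSdef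
  -- basic measurability
  have hXm : ∀ s, Measurable (X s) := fun s => (hadapted s).mono (ℱ.le s) le_rfl
  have hSm : ∀ t, Measurable (S t) := fun t => Finset.measurable_sum _ fun s _ => hXm s
  have hSF : ∀ t, StronglyMeasurable[ℱ t] (S t) := by
    intro t
    apply Finset.stronglyMeasurable_fun_sum
    intro s hs
    exact ((hadapted s).mono (ℱ.mono (Finset.mem_Icc.mp hs).2) le_rfl).stronglyMeasurable
  set D : ℕ → Set Ω := fun t => {ω | S t ω ≤ B} with hDdef
  have hDF : ∀ t, MeasurableSet[ℱ t] (D t) :=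
    fun t => measurableSet_le (hSF t).measurable measurable_const
  have hDm : ∀ t, MeasurableSet (D t) := fun t => ℱ.le t _ (hDF t)
  -- monotonicity of partial sums
  have hSmono : ∀ (ω : Ω) {a b : ℕ}, a ≤ b → S a ω ≤ S b ω := by
    intro ω a b hab
    apply Finset.sum_le_sum_of_subset_of_nonneg (Finset.Icc_subset_Icc_right hab)
    intro s hs _
    exact (hbound s ω (Finset.mem_Icc.mp hs).1).1
  have hSsucc : ∀ (ω : Ω) (t : ℕ), S (t + 1) ω = S t ω + X (t + 1) ω := by
    intro ω t
    simp [hSdef, Finset.sum_Icc_succ_top (Nat.one_le_iff_ne_zero.mpr (Nat.succ_ne_zero t))]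
  have hSzero : ∀ ω : Ω, S 0 ω = 0 := by intro ω; simp [hSdef]
  have hSrange : ∀ (ω : Ω) (n : ℕ), ∑ t ∈ Finset.range n, X (t + 1) ω = S n ω := by
    intro ω n
    induction n with
    | zero => simp [hSzero]
    | succ n ih => rw [Finset.sum_range_succ, ih, hSsucc]
  -- pointwise bound on indicator sums
  have hL : ∀ (n : ℕ) (ω : Ω),
      ∑ t ∈ Finset.range n, (D t).indicator (X (t + 1)) ω ≤ B + 1 := by
    intro n ω
    induction n with
    | zero => simp; linarith
    | succ n ih =>
      by_cases h : S n ω ≤ B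
      · have hall : ∀ t ∈ Finset.range (n + 1),
            (D t).indicator (X (t + 1)) ω = X (t + 1) ω := by
          intro t ht
          have : S t ω ≤ B := le_trans (hSmono ω (Nat.le_of_lt_succ (Finset.mem_range.mp ht))) h
          exact Set.indicator_of_mem (show ω ∈ D t from this) (X (t + 1))
        rw [Finset.sum_congr rfl hall, hSrange ω (n + 1), hSsucc]
        have := (hbound (n + 1) ω (Nat.le_add_left 1 n)).2
        linarith
      · rw [Finset.sum_range_succ,
          Set.indicator_of_notMem (show ω ∉ D n from h) (X (n + 1))]
        simpa using ih
  -- integrability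
  have hXint : ∀ s : ℕ, Integrable (X (s + 1)) μ := by
    intro s
    refine Integrable.mono' (integrable_const 1) (hXm (s + 1)).aestronglyMeasurable ?_
    filter_upwards with ω
    have := hbound (s + 1) ω (Nat.le_add_left 1 s)
    rw [Real.norm_eq_abs, abs_le]
    exact ⟨by linarith [this.1], this.2⟩
  -- key conditional expectation estimate
  have hkey : ∀ t : ℕ, ε * (μ (D t)).toReal ≤ ∫ ω in D t, X (t + 1) ω ∂μ := by
    intro t
    have hc := hcond (t + 1) (Nat.le_add_left 1 t)
    simp only [Nat.add_sub_cancel] at hc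
    rw [← setIntegral_condExp (ℱ.le t) (hXint t) (hDF t)]
    calc ε * (μ (D t)).toReal = ∫ _ω in D t, ε ∂μ := by
          rw [setIntegral_const, smul_eq_mul, mul_comm, measureReal_def]
      _ ≤ ∫ ω in D t, (μ[X (t + 1) | ℱ t]) ω ∂μ := by
          refine setIntegral_mono_ae (integrableOn_const (measure_ne_top μ _))
            integrable_condExp.integrableOn ?_
          exact hc
  -- main finite-sum estimate
  have hsum : ∀ n : ℕ, ε * ∑ t ∈ Finset.range n, (μ (D t)).toReal ≤ B + 1 := by
    intro n
    rw [Finset.mul_sum]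
    calc ∑ t ∈ Finset.range n, ε * (μ (D t)).toReal
        ≤ ∑ t ∈ Finset.range n, ∫ ω in D t, X (t + 1) ω ∂μ :=
          Finset.sum_le_sum fun t _ => hkey t
      _ = ∑ t ∈ Finset.range n, ∫ ω, (D t).indicator (X (t + 1)) ω ∂μ := by
          refine Finset.sum_congr rfl fun t _ => ?_
          rw [integral_indicator (hDm t)]
      _ = ∫ ω, ∑ t ∈ Finset.range n, (D t).indicator (X (t + 1)) ω ∂μ := by
          rw [integral_finset_sum]
          exact fun t _ => (hXint t).indicator (hDm t)
      _ ≤ ∫ _ω, (B + 1) ∂μ := by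
          refine integral_mono (integrable_finset_sum _ fun t _ =>
            (hXint t).indicator (hDm t)) (integrable_const _) ?_
          intro ω
          exact hL n ω
      _ = B + 1 := by simp
  -- finite sums in ℝ≥0∞
  have hsum' : ∀ n : ℕ, ∑ t ∈ Finset.range n, μ (D t) ≤ ENNReal.ofReal ((B + 1) / ε) := by
    intro n
    have hr : (0:ℝ) ≤ ∑ t ∈ Finset.range n, (μ (D t)).toReal :=
      Finset.sum_nonneg fun t _ => ENNReal.toReal_nonneg
    have h1 : ∑ t ∈ Finset.range n, (μ (D t)).toReal ≤ (B + 1) / ε := by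
      rw [le_div_iff₀ hε, mul_comm]
      exact hsum n
    calc ∑ t ∈ Finset.range n, μ (D t)
        = ENNReal.ofReal (∑ t ∈ Finset.range n, (μ (D t)).toReal) := by
          rw [ENNReal.ofReal_sum_of_nonneg fun t _ => ENNReal.toReal_nonneg]
          exact Finset.sum_congr rfl fun t _ =>
            (ENNReal.ofReal_toReal (measure_ne_top μ _)).symm
      _ ≤ ENNReal.ofReal ((B + 1) / ε) := ENNReal.ofReal_le_ofReal h1
  have htsum : ∑' t, μ (D t) ≤ ENNReal.ofReal ((B + 1) / ε) := by
    rw [ENNReal.tsum_eq_iSup_sum]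
    refine iSup_le fun s => ?_
    obtain ⟨n, hn⟩ := s.exists_nat_subset_range
    exact le_trans (Finset.sum_le_sum_of_subset hn) (hsum' n)
  -- pointwise bound on τ
  have hpt : ∀ ω : Ω, (τ ω : ℝ≥0∞) ≤ ∑' t, (D t).indicator (fun _ => (1:ℝ≥0∞)) ω := by
    intro ω
    have hmem : ∀ t < τ ω, ω ∈ D t := by
      intro t ht
      by_contra h
      have hBS : B < S t ω := lt_of_not_ge h
      have ht1 : 1 ≤ t := by
        by_contra h1
        have : t = 0 := by omega
        rw [this, hSzero] at hBS
        linarith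
      have : τ ω ≤ t := by
        rw [hτ ω]
        exact Nat.sInf_le ⟨ht1, hBS⟩
      omega
    calc (τ ω : ℝ≥0∞) = ∑ t ∈ Finset.range (τ ω), (D t).indicator (fun _ => (1:ℝ≥0∞)) ω := by
          rw [Finset.sum_congr rfl fun t ht =>
            Set.indicator_of_mem (hmem t (Finset.mem_range.mp ht)) _]
          simp
      _ ≤ ∑' t, (D t).indicator (fun _ => (1:ℝ≥0∞)) ω := ENNReal.sum_le_tsum _
  calc ∫⁻ ω, (τ ω : ℝ≥0∞) ∂μ
      ≤ ∫⁻ ω, ∑' t, (D t).indicator (fun _ => (1:ℝ≥0∞)) ω ∂μ := lintegral_mono hpt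
    _ = ∑' t, ∫⁻ ω, (D t).indicator (fun _ => (1:ℝ≥0∞)) ω ∂μ :=
        lintegral_tsum fun t => (measurable_const.indicator (hDm t)).aemeasurable
    _ = ∑' t, μ (D t) := by
        refine tsum_congr fun t => ?_
        exact lintegral_indicator_one (hDm t)
    _ ≤ ENNReal.ofReal ((B + 1) / ε) := htsum
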